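/- arXiv:1702.01362 — 5 statements merged into one kernel-verified Lean document; each statement's English description precedes it below -/
import Mathlib

section
/- Let p₁,p₂>0 with p₁+p₂=1 and h₁,h₂>0 with h₁≠h₂. Then the function t ↦ (p₁h₁ + p₂h₂ + h₁h₂t)/(1 + (p₁h₂ + p₂h₁)t) is strictly decreasing on [0,∞). -/
theorem stmt_1 (p₁ p₂ h₁ h₂ : ℝ) (hp₁ : 0 < p₁) (hp₂ : 0 < p₂)
    (hps : p₁ + p₂ = 1) (hh₁ : 0 < h₁) (hh₂ : 0 < h₂) (hne : h₁ ≠ h₂) :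
    StrictAntiOn (fun t : ℝ =>
      (p₁ * h₁ + p₂ * h₂ + h₁ * h₂ * t) / (1 + (p₁ * h₂ + p₂ * h₁) * t))
      (Set.Ici 0) := by
  intro x hx y hy hxy
  simp only [Set.mem_Ici] at hx hy
  have hC : 0 < p₁ * h₂ + p₂ * h₁ := by positivity
  have hdx : 0 < 1 + (p₁ * h₂ + p₂ * h₁) * x := by positivity
  have hdy : 0 < 1 + (p₁ * h₂ + p₂ * h₁) * y := by positivity
  rw [div_lt_div_iff₀ hdy hdx]
  have hsq : 0 < p₁ * p₂ * (h₁ - h₂) ^ 2 * (y - x) := by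
    have hd : h₁ - h₂ ≠ 0 := sub_ne_zero.mpr hne
    have h2 : 0 < (h₁ - h₂) ^ 2 := by positivity
    have hyx : 0 < y - x := by linarith
    exact mul_pos (mul_pos (mul_pos hp₁ hp₂) h2) hyx
  have hps' : p₂ = 1 - p₁ := by linarith
  subst hps'
  nlinarith [hsq]
end

section
/- Let n ≥ 1, p₁,…,pₙ > 0 with Σ pᵢ = 1, and h₁,…,hₙ > 0. Define D(t) = Σᵢ pᵢ/(1+hᵢt) and h(t) = (1/D(t) − 1)/t for t > 0. Then h(t) tends to the weighted harmonic mean H = (Σᵢ pᵢ/hᵢ)⁻¹ as t → ∞. -/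
open Filter Topology

theorem stmt_4 (n : ℕ) (hn : 1 ≤ n) (p h : Fin n → ℝ)
    (hp : ∀ i, 0 < p i) (hps : ∑ i, p i = 1) (hh : ∀ i, 0 < h i) :
    Filter.Tendsto (fun t : ℝ => (1 / (∑ i, p i / (1 + h i * t)) - 1) / t)
      Filter.atTop (nhds (∑ i, p i / h i)⁻¹) := by
  haveI : Nonempty (Fin n) := Fin.pos_iff_nonempty.mp hn
  have hSpos : 0 < ∑ i, p i / h i :=
    Finset.sum_pos (fun i _ => div_pos (hp i) (hh i)) Finset.univ_nonempty
  -- D(t) → 0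
  have hD0 : Tendsto (fun t : ℝ => ∑ i, p i / (1 + h i * t)) atTop (𝓝 0) := by
    have : Tendsto (fun t : ℝ => ∑ i : Fin n, p i / (1 + h i * t)) atTop
        (𝓝 (∑ _i : Fin n, (0 : ℝ))) := by
      refine tendsto_finset_sum _ fun i _ => ?_
      refine Tendsto.div_atTop tendsto_const_nhds ?_
      exact tendsto_atTop_add_const_left _ 1
        ((tendsto_const_mul_atTop_of_pos (hh i)).mpr tendsto_id)
    simpa using this
  -- t * D(t) written as ∑ p i / (1/t + h i) tends to S
  have hT : Tendsto (fun t : ℝ => ∑ i, p i / (1 / t + h i)) atTop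
      (𝓝 (∑ i, p i / h i)) := by
    refine tendsto_finset_sum _ fun i _ => ?_
    have h1 : Tendsto (fun t : ℝ => 1 / t + h i) atTop (𝓝 (0 + h i)) := by
      simpa [one_div] using (tendsto_inv_atTop_zero).add
        (tendsto_const_nhds : Filter.Tendsto (fun _ : ℝ => h i) atTop (𝓝 (h i)))
    have := (tendsto_const_nhds (x := p i)).div h1 (by simpa using (hh i).ne')
    rw [zero_add] at this
    exact this
  have hfinal : Tendsto (fun t : ℝ =>
      (1 - ∑ i, p i / (1 + h i * t)) * (∑ i, p i / (1 / t + h i))⁻¹) atTop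
      (𝓝 (∑ i, p i / h i)⁻¹) := by
    have := ((tendsto_const_nhds (x := (1:ℝ))).sub hD0).mul
      (hT.inv₀ (ne_of_gt hSpos))
    simpa using this
  refine hfinal.congr' ?_
  filter_upwards [eventually_gt_atTop (0 : ℝ)] with t ht
  have hDpos : 0 < ∑ i, p i / (1 + h i * t) :=
    Finset.sum_pos (fun i _ => div_pos (hp i) (by nlinarith [mul_pos (hh i) ht])) Finset.univ_nonempty
  have hsum : ∑ i, p i / (1 / t + h i) = t * ∑ i, p i / (1 + h i * t) := by
    rw [Finset.mul_sum]
    refine Finset.sum_congr rfl fun i _ => ?_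
    have h1 : (1 : ℝ) + h i * t ≠ 0 := by nlinarith [mul_pos (hh i) ht]
    field_simp
  rw [hsum, mul_inv, eq_div_iff (ne_of_gt ht)]
  have hDne := hDpos.ne'
  set D := ∑ i, p i / (1 + h i * t) with hD
  have ha : t⁻¹ * t = 1 := inv_mul_cancel₀ ht.ne'
  have hb : D⁻¹ * D = 1 := inv_mul_cancel₀ hDne
  rw [one_div]
  linear_combination ((1 - D) * D⁻¹) * ha - hb
end

section
/- Let p₁,…,pₙ > 0 with Σ pᵢ = 1 and let r₁ < r₂ < … < rₙ be positive reals. Define D(t) = Σᵢ pᵢ e^{−rᵢt} and the local discount rate r(t) = −D'(t)/D(t). Then r(t) → r₁ as t → ∞. -/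
open Filter Real

theorem stmt_6 (n : ℕ) (p r : Fin (n + 1) → ℝ)
    (hp : ∀ i, 0 < p i) (hps : ∑ i, p i = 1) (hr : ∀ i, 0 < r i)
    (hmono : StrictMono r) :
    Filter.Tendsto
      (fun t : ℝ =>
        -(deriv (fun s : ℝ => ∑ i, p i * Real.exp (-(r i) * s)) t)
          / (∑ i, p i * Real.exp (-(r i) * t)))
      Filter.atTop (nhds (r 0)) := by
  -- compute the derivative
  have hderiv : ∀ t : ℝ, deriv (fun s : ℝ => ∑ i, p i * Real.exp (-(r i) * s)) t
      = ∑ i, p i * (-(r i)) * Real.exp (-(r i) * t) := by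
    intro t
    have h : HasDerivAt (fun s : ℝ => ∑ i, p i * Real.exp (-(r i) * s))
        (∑ i, p i * (-(r i)) * Real.exp (-(r i) * t)) t := by
      apply HasDerivAt.fun_sum
      intro i _
      have h1 : HasDerivAt (fun s : ℝ => -(r i) * s) (-(r i)) t := by
        simpa using (hasDerivAt_id t).const_mul (-(r i))
      have h2 := h1.exp
      have h3 := h2.const_mul (p i)
      convert h3 using 1
      · rfl
      · ring
    exact h.deriv
  -- the shifted functions
  have key : Tendsto (fun t : ℝ =>
      (∑ i, p i * r i * Real.exp (-(r i - r 0) * t))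
        / (∑ i, p i * Real.exp (-(r i - r 0) * t))) atTop (nhds (r 0)) := by
    have hnum : Tendsto (fun t : ℝ => ∑ i, p i * r i * Real.exp (-(r i - r 0) * t))
        atTop (nhds (p 0 * r 0)) := by
      have : (p 0 * r 0) = ∑ i : Fin (n+1), (if i = 0 then p 0 * r 0 else 0) := by simp
      rw [this]
      apply tendsto_finset_sum
      intro i _
      by_cases hi : i = 0
      · subst hi; simp
      · simp only [if_neg hi]
        have hpos : 0 < r i - r 0 := by
          have := hmono (show (0 : Fin (n+1)) < i from by
            exact lt_of_le_of_ne (Fin.zero_le i) (Ne.symm hi))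
          linarith
        have : Tendsto (fun t : ℝ => Real.exp (-(r i - r 0) * t)) atTop (nhds 0) := by
          have h1 : Tendsto (fun t : ℝ => (r i - r 0) * t) atTop atTop :=
            Tendsto.const_mul_atTop hpos tendsto_id
          exact (Real.tendsto_exp_neg_atTop_nhds_zero.comp h1).congr
            (fun t => by simp [Function.comp]; ring)
        have := this.const_mul (p i * r i)
        simpa using this
    have hden : Tendsto (fun t : ℝ => ∑ i, p i * Real.exp (-(r i - r 0) * t))
        atTop (nhds (p 0)) := by
      have : (p 0) = ∑ i : Fin (n+1), (if i = 0 then p 0 else 0) := by simp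
      rw [this]
      apply tendsto_finset_sum
      intro i _
      by_cases hi : i = 0
      · subst hi; simp
      · simp only [if_neg hi]
        have hpos : 0 < r i - r 0 := by
          have := hmono (show (0 : Fin (n+1)) < i from
            lt_of_le_of_ne (Fin.zero_le i) (Ne.symm hi))
          linarith
        have : Tendsto (fun t : ℝ => Real.exp (-(r i - r 0) * t)) atTop (nhds 0) := by
          have h1 : Tendsto (fun t : ℝ => (r i - r 0) * t) atTop atTop :=
            Tendsto.const_mul_atTop hpos tendsto_id
          exact (Real.tendsto_exp_neg_atTop_nhds_zero.comp h1).congr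
            (fun t => by simp [Function.comp]; ring)
        have := this.const_mul (p i)
        simpa using this
    have := hnum.div hden (ne_of_gt (hp 0))
    rw [mul_div_cancel_left₀ (r 0) (ne_of_gt (hp 0))] at this
    exact this
  -- rewrite the original function as the shifted quotient
  have heq : ∀ t : ℝ,
      -(deriv (fun s : ℝ => ∑ i, p i * Real.exp (-(r i) * s)) t)
        / (∑ i, p i * Real.exp (-(r i) * t))
      = (∑ i, p i * r i * Real.exp (-(r i - r 0) * t))
          / (∑ i, p i * Real.exp (-(r i - r 0) * t)) := by
    intro t
    rw [hderiv]
    have e1 : ∀ i : Fin (n+1), Real.exp (-(r i - r 0) * t)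
        = Real.exp (-(r i) * t) * Real.exp (r 0 * t) := by
      intro i
      rw [← Real.exp_add]; ring_nf
    have hnum : (∑ i, p i * r i * Real.exp (-(r i - r 0) * t))
        = (-(∑ i, p i * (-(r i)) * Real.exp (-(r i) * t))) * Real.exp (r 0 * t) := by
      rw [← Finset.sum_neg_distrib, Finset.sum_mul]
      apply Finset.sum_congr rfl
      intro i _
      rw [e1 i]; ring
    have hden : (∑ i, p i * Real.exp (-(r i - r 0) * t))
        = (∑ i, p i * Real.exp (-(r i) * t)) * Real.exp (r 0 * t) := by
      rw [Finset.sum_mul]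
      apply Finset.sum_congr rfl
      intro i _
      rw [e1 i]; ring
    rw [hnum, hden, mul_div_mul_right _ _ (Real.exp_ne_zero _)]
  simpa only [heq] using key
end

section
/- Let h: (0,∞) → (0,∞) be a function such that t ↦ 1/(1+h(t)t) equals the mixture Σᵢ pᵢ/(1+hᵢt) with pᵢ>0, Σpᵢ=1, hᵢ>0. If h is constant, h(t) = c for all t>0, then n effective: all hᵢ with pᵢ>0 are equal to c. -/
open Finset Polynomial

theorem stmt_11 (n : ℕ) (p h : Fin n → ℝ)
    (hp : ∀ i, 0 < p i) (hps : ∑ i, p i = 1) (hh : ∀ i, 0 < h i)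
    (c : ℝ)
    (hconst : ∀ t : ℝ, 0 < t → 1 / (1 + c * t) = ∑ i, p i / (1 + h i * t)) :
    ∀ i, h i = c := by
  intro i0
  have hne : (Finset.univ : Finset (Fin n)).Nonempty := ⟨i0, Finset.mem_univ i0⟩
  have hit : ∀ (t : ℝ), 0 < t → ∀ i, 0 < 1 + h i * t := by
    intro t ht i
    have := hh i
    positivity
  -- c > 0
  have hc : 0 < c := by
    by_contra hcle
    push_neg at hcle
    rcases lt_or_eq_of_le hcle with hlt | heq
    · -- c < 0 : take t = -1/c
      have ht : (0:ℝ) < -1 / c := by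
        rw [div_pos_iff]
        right
        constructor <;> linarith
      have hcne : c ≠ 0 := ne_of_lt hlt
      have h0 : 1 + c * (-1 / c) = 0 := by
        field_simp
        norm_num
      have := hconst (-1/c) ht
      rw [h0] at this
      simp only [div_zero] at this
      have hpos : 0 < ∑ i, p i / (1 + h i * (-1/c)) :=
        Finset.sum_pos (fun i _ => div_pos (hp i) (hit _ ht i)) hne
      linarith
    · -- c = 0 : take t = 1
      subst heq
      have := hconst 1 one_pos
      simp only [zero_mul, add_zero, div_one, mul_one] at this
      have hlt : ∑ i, p i / (1 + h i * 1) < ∑ i, p i := by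
        apply Finset.sum_lt_sum_of_nonempty hne
        intro i _
        rw [div_lt_iff₀ (hit 1 one_pos i)]
        nlinarith [hp i, hh i]
      simp only [mul_one] at hlt
      rw [hps] at hlt
      linarith [this]
  have hct : ∀ (t : ℝ), 0 < t → 0 < 1 + c * t := by
    intro t ht
    positivity
  -- key identity
  have key : ∀ (t : ℝ), 0 < t → ∑ i, p i * (c - h i) / (1 + h i * t) = 0 := by
    intro t ht
    have htne : t ≠ 0 := ne_of_gt ht
    have hctne : (1 + c * t) ≠ 0 := ne_of_gt (hct t ht)
    calc ∑ i, p i * (c - h i) / (1 + h i * t)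
        = ∑ i, ((1 + c * t) / t * (p i / (1 + h i * t)) - p i / t) := by
          refine Finset.sum_congr rfl fun i _ => ?_
          have hi := ne_of_gt (hit t ht i)
          field_simp
          ring
      _ = (1 + c * t) / t * (∑ i, p i / (1 + h i * t)) - (∑ i, p i) / t := by
          rw [Finset.sum_sub_distrib, ← Finset.mul_sum, ← Finset.sum_div]
      _ = (1 + c * t) / t * (1 / (1 + c * t)) - 1 / t := by
          rw [← hconst t ht, hps]
      _ = 0 := by field_simp; ring
  -- group by distinct values
  set V : Finset ℝ := Finset.image h Finset.univ with hV
  have hVpos : ∀ a ∈ V, 0 < a := by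
    intro a ha
    rw [hV, Finset.mem_image] at ha
    obtain ⟨i, _, rfl⟩ := ha
    exact hh i
  set S : ℝ → ℝ := fun a => ∑ i ∈ Finset.univ.filter (fun i => h i = a), p i with hS
  have grouped : ∀ (t : ℝ), 0 < t →
      ∑ a ∈ V, (c - a) * S a / (1 + a * t) = 0 := by
    intro t ht
    have := Finset.sum_fiberwise_of_maps_to (s := Finset.univ) (t := V) (g := h)
      (f := fun i => p i * (c - h i) / (1 + h i * t))
      (fun x _ => Finset.mem_image_of_mem h (Finset.mem_univ x))
    rw [key t ht] at this
    rw [← this]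
    refine Finset.sum_congr rfl fun a _ => ?_
    rw [hS]
    simp only
    rw [eq_comm]
    calc ∑ i ∈ Finset.univ.filter (fun i => h i = a), p i * (c - h i) / (1 + h i * t)
        = ∑ i ∈ Finset.univ.filter (fun i => h i = a), p i * ((c - a) / (1 + a * t)) := by
          refine Finset.sum_congr rfl fun i hi => ?_
          rw [Finset.mem_filter] at hi
          rw [hi.2]
          ring
      _ = ((c - a) * ∑ i ∈ Finset.univ.filter (fun i => h i = a), p i) / (1 + a * t) := by
          rw [← Finset.sum_mul]
          ring
  -- polynomial identity
  set F : Polynomial ℝ := ∑ a ∈ V, Polynomial.C ((c - a) * S a) *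
      ∏ b ∈ V.erase a, (1 + Polynomial.C b * Polynomial.X) with hF
  have hev : ∀ t : ℝ, F.eval t =
      ∑ a ∈ V, (c - a) * S a * ∏ b ∈ V.erase a, (1 + b * t) := by
    intro t
    rw [hF]
    simp [Polynomial.eval_finset_sum, Polynomial.eval_prod]
  have hF0 : F = 0 := by
    apply Polynomial.eq_zero_of_infinite_isRoot
    refine Set.Infinite.mono ?_ (Set.Ioi_infinite 0)
    intro t ht
    have ht' : (0:ℝ) < t := ht
    show F.IsRoot t
    rw [Polynomial.IsRoot.def, hev t]
    have hterm : ∀ a ∈ V, (c - a) * S a * ∏ b ∈ V.erase a, (1 + b * t) =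
        ((c - a) * S a / (1 + a * t)) * ∏ b ∈ V, (1 + b * t) := by
      intro a ha
      have hapos := hVpos a ha
      have hat : 1 + a * t ≠ 0 := by positivity
      rw [← Finset.prod_erase_mul V _ ha]
      field_simp
      simp_rw [mul_comm t]
    rw [Finset.sum_congr rfl hterm, ← Finset.sum_mul, grouped t ht', zero_mul]
  -- evaluate at -1 / h i0
  have ha0 : 0 < h i0 := hh i0
  have ha0V : h i0 ∈ V := by
    rw [hV]
    exact Finset.mem_image_of_mem h (Finset.mem_univ i0)
  have hev0 : (0:ℝ) = ∑ a ∈ V, (c - a) * S a * ∏ b ∈ V.erase a, (1 + b * (-1 / h i0)) := by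
    rw [← hev (-1 / h i0), hF0, Polynomial.eval_zero]
  rw [Finset.sum_eq_single (h i0)] at hev0
  · have hprod : ∏ b ∈ V.erase (h i0), (1 + b * (-1 / h i0)) ≠ 0 := by
      rw [Finset.prod_ne_zero_iff]
      intro b hb
      rw [Finset.mem_erase] at hb
      have hb' : 1 + b * (-1 / h i0) = (h i0 - b) / h i0 := by
        field_simp
        ring
      rw [hb']
      exact div_ne_zero (sub_ne_zero.mpr (Ne.symm hb.1)) (ne_of_gt ha0)
    have hSpos : 0 < S (h i0) := by
      rw [hS]
      exact Finset.sum_pos (fun i _ => hp i) ⟨i0, by simp⟩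
    rcases mul_eq_zero.mp hev0.symm with h1 | h2
    · rcases mul_eq_zero.mp h1 with h3 | h4
      · linarith [sub_eq_zero.mp h3]
      · exact absurd h4 (ne_of_gt hSpos)
    · exact absurd h2 hprod
  · intro a haV hane
    have hmem : h i0 ∈ V.erase a := Finset.mem_erase.mpr ⟨Ne.symm hane, ha0V⟩
    rw [Finset.prod_eq_zero hmem (by field_simp; norm_num), mul_zero]
  · intro habs
    exact absurd ha0V habs
end

section
/- Let p₁,…,pₙ > 0 with Σ pᵢ = 1 and h₁,…,hₙ > 0, not all hᵢ equal. Define D(t) = Σᵢ pᵢ/(1+hᵢt) and h(t) = (1/D(t)−1)/t. Then for all t > 0, h(t) > H where H = (Σᵢ pᵢ/hᵢ)⁻¹ is the weighted harmonic mean. -/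
open Finset Set

lemma phi_strict_concave {t : ℝ} (ht : 0 < t) :
    StrictConcaveOn ℝ (Set.Ioi (0:ℝ)) (fun u : ℝ => u / (u + t)) := by
  constructor
  · exact convex_Ioi 0
  · intro x hx y hy hxy a b ha hb hab
    simp only [smul_eq_mul] at *
    rw [Set.mem_Ioi] at hx hy
    have hxt : 0 < x + t := by linarith
    have hyt : 0 < y + t := by linarith
    have habt : 0 < a * x + b * y + t := by positivity
    have hxy2 : 0 < (x - y)^2 := by
      have : x - y ≠ 0 := sub_ne_zero.2 hxy
      positivity
    rw [← mul_div_assoc, ← mul_div_assoc,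
      div_add_div _ _ (ne_of_gt hxt) (ne_of_gt hyt), div_lt_div_iff₀ (by positivity) habt]
    obtain rfl : b = 1 - a := by linarith
    have key : (a * x + (1-a) * y) * ((x + t) * (y + t)) -
        (a * x * (y + t) + (x + t) * ((1-a) * y)) * (a * x + (1-a) * y + t)
        = t * (a * (1-a) * (x - y)^2) := by ring
    nlinarith [mul_pos (mul_pos ha hb) (mul_pos ht hxy2)]

theorem stmt_18 (n : ℕ) (p h : Fin n → ℝ)
    (hp : ∀ i, 0 < p i) (hps : ∑ i, p i = 1) (hh : ∀ i, 0 < h i)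
    (hne : ∃ i j, h i ≠ h j) :
    ∀ t : ℝ, 0 < t →
      (1 / (∑ i, p i / (1 + h i * t)) - 1) / t > (∑ i, p i / h i)⁻¹ := by
  intro t ht
  have hn0 : n ≠ 0 := by rintro rfl; obtain ⟨i, _⟩ := hne; exact i.elim0
  set u : Fin n → ℝ := fun i => (h i)⁻¹ with hu
  have hui : ∀ i, 0 < u i := fun i => inv_pos.2 (hh i)
  set U : ℝ := ∑ i, p i / h i with hU
  have hUpos : 0 < U := by
    rw [hU]
    refine Finset.sum_pos (fun i _ => div_pos (hp i) (hh i)) ?_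
    exact Finset.univ_nonempty_iff.2 (Fin.pos_iff_nonempty.1 (Nat.pos_of_ne_zero hn0))
  have hUsum : ∑ i, p i • u i = U := by
    simp [hu, hU, div_eq_mul_inv, smul_eq_mul]
  -- Jensen
  have jensen := (phi_strict_concave ht).lt_map_sum (t := Finset.univ) (w := p) (p := u)
    (fun i _ => hp i) hps (fun i _ => hui i) ?_
  swap
  · obtain ⟨i, j, hij⟩ := hne
    exact ⟨i, Finset.mem_univ i, j, Finset.mem_univ j,
      fun hc => hij (by simpa [hu, inv_inj] using hc)⟩
  rw [hUsum] at jensen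
  have hterm : ∀ i, p i • (u i / (u i + t)) = p i / (1 + h i * t) := by
    intro i
    have := (hh i).ne'
    simp only [hu, smul_eq_mul]
    field_simp
  have hD : (∑ i, p i / (1 + h i * t)) < U / (U + t) := by
    calc (∑ i, p i / (1 + h i * t)) = ∑ i, p i • (u i / (u i + t)) := by
          exact (Finset.sum_congr rfl fun i _ => (hterm i).symm)
      _ < U / (U + t) := jensen
  have hDpos : 0 < ∑ i, p i / (1 + h i * t) := by
    refine Finset.sum_pos (fun i _ => div_pos (hp i) (by nlinarith [hh i])) ?_
    exact Finset.univ_nonempty_iff.2 (Fin.pos_iff_nonempty.1 (Nat.pos_of_ne_zero hn0))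
  -- algebra
  have h1 : (1 + U⁻¹ * t) < 1 / (∑ i, p i / (1 + h i * t)) := by
    rw [lt_div_iff₀ hDpos]
    calc (1 + U⁻¹ * t) * (∑ i, p i / (1 + h i * t))
        < (1 + U⁻¹ * t) * (U / (U + t)) := by
          have : (0:ℝ) < 1 + U⁻¹ * t := by positivity
          exact (mul_lt_mul_iff_right₀ this).2 hD
      _ = 1 := by field_simp
  rw [gt_iff_lt, lt_div_iff₀ ht]
  linarith
end
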